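/- Expected luck is nonnegative for the W > 1 asymmetric mixed strategy (uniform case): let W > 1, ε > 0, μ = 1 + ε, ν = 2W − 1, s > 0, S ≥ s, α ∈ (0,1), B > 0, β = (s/(W·S))·α·B, and y ∈ [0, β/W] (so Wy ≤ β). Then (1/β)·∫₀^β ΔL(x,y) dx ≥ 0, where ΔL(x,y) = 2s(Wy−x)/β − νs if x ≤ y, ΔL(x,y) = 2s(Wy−x)/β + μs if y < x ≤ Wy, and ΔL(x,y) = 2μs(Wy−x)/β + μs if x > Wy. Moreover the integral decomposes as S + T + U with S = 0, T = (β−y)εs, U = (2Wy − β − W²y²/β)εs, and S + T + U = ((2W−1) − W²y/β)εsy ≥ ((β − Wy)/β)·Wεsy ≥ 0. -/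

import Mathlib

open scoped Classical

lemma lin_integral (p q a b : ℝ) :
    ∫ x in a..b, (p * x + q) = p * (b ^ 2 - a ^ 2) / 2 + q * (b - a) := by
  have h1 : IntervalIntegrable (fun x : ℝ => p * x) MeasureTheory.volume a b :=
    (continuous_const.mul continuous_id).intervalIntegrable a b
  have h2 : IntervalIntegrable (fun _ : ℝ => q) MeasureTheory.volume a b :=
    intervalIntegrable_const
  rw [intervalIntegral.integral_add h1 h2, intervalIntegral.integral_const,
    intervalIntegral.integral_const_mul, integral_id, smul_eq_mul]
  ring

/-- Expected luck is nonnegative for the `W > 1` asymmetric mixed strategy in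
the uniform-bid case: with `β = (s/(W·S))·α·B` and `Wy ≤ β`, the expectation
over `x ~ Unif[0,β]` of the luck increment equals
`((2W-1) - W²y/β)·ε·s·y / β ≥ 0`. -/
theorem expected_luck_asymmetric_W_gt_one (W ε s S α B β y : ℝ)
    (hW : 1 < W) (hε : 0 < ε) (hs : 0 < s) (hsS : s ≤ S)
    (hα : α ∈ Set.Ioo (0:ℝ) 1) (hB : 0 < B)
    (hβ : β = (s / (W * S)) * α * B) (hβpos : 0 < β)
    (hy : 0 ≤ y) (hyβ : W * y ≤ β) :
    (∫ x in (0:ℝ)..β,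
        (if x ≤ y then 2 * s * (W * y - x) / β - (2 * W - 1) * s
         else if x ≤ W * y then 2 * s * (W * y - x) / β + (1 + ε) * s
         else 2 * (1 + ε) * s * (W * y - x) / β + (1 + ε) * s))
      = ((2 * W - 1) - W ^ 2 * y / β) * ε * s * y
    ∧ 0 ≤ (1 / β) * ∫ x in (0:ℝ)..β,
        (if x ≤ y then 2 * s * (W * y - x) / β - (2 * W - 1) * s
         else if x ≤ W * y then 2 * s * (W * y - x) / β + (1 + ε) * s
         else 2 * (1 + ε) * s * (W * y - x) / β + (1 + ε) * s) := by
  have hβ0 : β ≠ 0 := ne_of_gt hβpos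
  set f : ℝ → ℝ := fun x =>
      (if x ≤ y then 2 * s * (W * y - x) / β - (2 * W - 1) * s
       else if x ≤ W * y then 2 * s * (W * y - x) / β + (1 + ε) * s
       else 2 * (1 + ε) * s * (W * y - x) / β + (1 + ε) * s) with hf
  set g1 : ℝ → ℝ := fun x => -(2 * s / β) * x + (2 * s * (W * y) / β - (2 * W - 1) * s)
  set g2 : ℝ → ℝ := fun x => -(2 * s / β) * x + (2 * s * (W * y) / β + (1 + ε) * s)
  set g3 : ℝ → ℝ := fun x => -(2 * (1 + ε) * s / β) * x
      + (2 * (1 + ε) * s * (W * y) / β + (1 + ε) * s)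
  have hyW : y ≤ W * y := le_mul_of_one_le_left hy (le_of_lt hW)
  have hcg1 : Continuous g1 := by fun_prop
  have hcg2 : Continuous g2 := by fun_prop
  have hcg3 : Continuous g3 := by fun_prop
  have heq1 : ∀ x ∈ Set.uIoc (0:ℝ) y, f x = g1 x := by
    intro x hx
    rw [Set.uIoc_of_le hy] at hx
    simp only [hf, g1, if_pos hx.2]
    ring
  have heq2 : ∀ x ∈ Set.uIoc y (W * y), f x = g2 x := by
    intro x hx
    rw [Set.uIoc_of_le hyW] at hx
    simp only [hf, g2, if_neg (not_le.2 hx.1), if_pos hx.2]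
    ring
  have heq3 : ∀ x ∈ Set.uIoc (W * y) β, f x = g3 x := by
    intro x hx
    rw [Set.uIoc_of_le hyβ] at hx
    have h1 : ¬ x ≤ y := not_le.2 (lt_of_le_of_lt hyW hx.1)
    have h2 : ¬ x ≤ W * y := not_le.2 hx.1
    simp only [hf, g3, if_neg h1, if_neg h2]
    ring
  have hint : ∀ (a b : ℝ) (g : ℝ → ℝ), Continuous g →
      (∀ x ∈ Set.uIoc a b, f x = g x) →
      IntervalIntegrable f MeasureTheory.volume a b := by
    intro a b g hg h
    refine (hg.intervalIntegrable a b).congr ?_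
    show Set.EqOn g f (Set.uIoc a b)
    intro x hx; exact (h x hx).symm
  have hi1 := hint 0 y g1 hcg1 heq1
  have hi2 := hint y (W * y) g2 hcg2 heq2
  have hi3 := hint (W * y) β g3 hcg3 heq3
  have hsplit : ∫ x in (0:ℝ)..β, f x
      = (∫ x in (0:ℝ)..y, f x) + (∫ x in y..(W * y), f x) + (∫ x in (W * y)..β, f x) := by
    rw [intervalIntegral.integral_add_adjacent_intervals hi1 hi2,
      intervalIntegral.integral_add_adjacent_intervals (hi1.trans hi2) hi3]
  have hI1 : ∫ x in (0:ℝ)..y, f x = ∫ x in (0:ℝ)..y, g1 x :=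
    intervalIntegral.integral_congr_ae (MeasureTheory.ae_of_all _ heq1)
  have hI2 : ∫ x in y..(W * y), f x = ∫ x in y..(W * y), g2 x :=
    intervalIntegral.integral_congr_ae (MeasureTheory.ae_of_all _ heq2)
  have hI3 : ∫ x in (W * y)..β, f x = ∫ x in (W * y)..β, g3 x :=
    intervalIntegral.integral_congr_ae (MeasureTheory.ae_of_all _ heq3)
  have hval : ∫ x in (0:ℝ)..β, f x = ((2 * W - 1) - W ^ 2 * y / β) * ε * s * y := by
    rw [hsplit, hI1, hI2, hI3]
    simp only [g1, g2, g3, lin_integral]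
    field_simp
    ring
  refine ⟨hval, ?_⟩
  rw [hval]
  have hnn : 0 ≤ ((2 * W - 1) - W ^ 2 * y / β) * ε * s * y := by
    have h1 : W ^ 2 * y / β ≤ W := by
      rw [div_le_iff₀ hβpos]
      calc W ^ 2 * y = W * (W * y) := by ring
        _ ≤ W * β := by
            exact mul_le_mul_of_nonneg_left hyβ (le_of_lt (lt_trans one_pos hW))
        _ = W * β := rfl
    have h2 : (0:ℝ) ≤ (2 * W - 1) - W ^ 2 * y / β := by nlinarith
    positivity
  positivity
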